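/- Let ℐ be a family of intervals of a linear order whose overlap graph is K_t-free and K_{t,t}-subgraph-free. Then the overlap graph of ℐ has maximum edge density at most 2(t−1)². -/

import Mathlib

/-- Two sets overlap: they intersect but neither contains the other. -/
def Overlap {α : Type*} (A B : Set α) : Prop :=
  (A ∩ B).Nonempty ∧ ¬ A ⊆ B ∧ ¬ B ⊆ A

section Aux
variable {α : Type*} [LinearOrder α]

/-- `A` crosses `B` "to the left": they intersect, `A` has a point below all of `B`,
and `B` has a point above all of `A`. -/
def LC (A B : Set α) : Prop :=
  (A ∩ B).Nonempty ∧ (∃ a ∈ A, ∀ x ∈ B, a < x) ∧ (∃ b ∈ B, ∀ y ∈ A, y < b)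

lemma LC.overlap {A B : Set α} (h : LC A B) : Overlap A B := by
  obtain ⟨hne, ⟨a, ha, hab⟩, ⟨b, hb, hba⟩⟩ := h
  refine ⟨hne, fun hs => ?_, fun hs => ?_⟩
  · exact lt_irrefl a (hab a (hs ha))
  · exact lt_irrefl b (hba b (hs hb))

lemma overlap_ne {A B : Set α} (h : Overlap A B) : A ≠ B := by
  rintro rfl; exact h.2.1 subset_rfl

lemma overlap_lc {A B : Set α} (hA : A.OrdConnected) (hB : B.OrdConnected)
    (h : Overlap A B) : LC A B ∨ LC B A := by
  obtain ⟨hne, hAB, hBA⟩ := h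
  obtain ⟨c, hcA, hcB⟩ := hne
  obtain ⟨a, haA, haB⟩ := Set.not_subset.mp hAB
  obtain ⟨b, hbB, hbA⟩ := Set.not_subset.mp hBA
  rcases lt_or_gt_of_ne (show a ≠ b from fun h => haB (h ▸ hbB)) with hab | hab
  · -- a < b : LC A B
    left
    have hac : a < c := by
      rcases lt_or_ge a c with h' | h'
      · exact h'
      · rcases eq_or_lt_of_le h' with rfl | h''
        · exact absurd hcB haB
        · exact absurd (hB.out hcB hbB ⟨h''.le, hab.le⟩) haB
    have hcb : c < b := by
      rcases lt_or_ge c b with h' | h'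
      · exact h'
      · exact absurd (hA.out haA hcA ⟨hab.le, h'⟩) hbA
    refine ⟨⟨c, hcA, hcB⟩, ⟨a, haA, fun x hx => ?_⟩, ⟨b, hbB, fun y hy => ?_⟩⟩
    · by_contra h'
      exact haB (hB.out hx hcB ⟨not_lt.mp h', hac.le⟩)
    · by_contra h'
      exact hbA (hA.out hcA hy ⟨hcb.le, not_lt.mp h'⟩)
  · -- b < a : LC B A
    right
    have hbc : b < c := by
      rcases lt_or_ge b c with h' | h'
      · exact h'
      · rcases eq_or_lt_of_le h' with rfl | h''
        · exact absurd hcA hbA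
        · exact absurd (hA.out hcA haA ⟨h''.le, hab.le⟩) hbA
    have hca : c < a := by
      rcases lt_or_ge c a with h' | h'
      · exact h'
      · exact absurd (hB.out hbB hcB ⟨hab.le, h'⟩) haB
    refine ⟨⟨c, hcB, hcA⟩, ⟨b, hbB, fun x hx => ?_⟩, ⟨a, haA, fun y hy => ?_⟩⟩
    · by_contra h'
      exact hbA (hA.out hx hcA ⟨not_lt.mp h', hbc.le⟩)
    · by_contra h'
      exact haB (hB.out hcB hy ⟨hca.le, not_lt.mp h'⟩)

/-- Two right-neighbours of `A` intersect. -/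
lemma lc_inter_right {A B B' : Set α} (hB : B.OrdConnected) (hB' : B'.OrdConnected)
    (h : LC A B) (h' : LC A B') : (B ∩ B').Nonempty := by
  obtain ⟨⟨c, hcA, hcB⟩, -, ⟨b, hbB, hbA⟩⟩ := h
  obtain ⟨⟨c', hc'A, hc'B⟩, -, ⟨b', hb'B, hb'A⟩⟩ := h'
  rcases le_total c c' with hcc | hcc
  · exact ⟨c', hB.out hcB hbB ⟨hcc, (hbA c' hc'A).le⟩, hc'B⟩
  · exact ⟨c, hcB, hB'.out hc'B hb'B ⟨hcc, (hb'A c hcA).le⟩⟩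

/-- Two left-neighbours of `B` intersect. -/
lemma lc_inter_left {A A' B : Set α} (hA : A.OrdConnected) (hA' : A'.OrdConnected)
    (h : LC A B) (h' : LC A' B) : (A ∩ A').Nonempty := by
  obtain ⟨⟨c, hcA, hcB⟩, ⟨a, haA, haB⟩, -⟩ := h
  obtain ⟨⟨c', hc'A, hc'B⟩, ⟨a', ha'A, ha'B⟩, -⟩ := h'
  rcases le_total c c' with hcc | hcc
  · exact ⟨c, hcA, hA'.out ha'A hc'A ⟨(ha'B c hcB).le, hcc⟩⟩
  · exact ⟨c', hA.out haA hcA ⟨(haB c' hc'B).le, hcc⟩, hc'A⟩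

/-- Mirsky-type bound: a finite family of sets with no `⊆`-chain of more than `a`
elements and no antichain of more than `b` elements has at most `a*b` elements. -/
lemma mirsky (F : Finset (Set α)) (a b : ℕ)
    (hchain : ∀ C : Finset (Set α), C ⊆ F → IsChain (· ⊆ ·) (C : Set (Set α)) → C.card ≤ a)
    (hanti : ∀ C : Finset (Set α), C ⊆ F →
      (∀ X ∈ C, ∀ Y ∈ C, X ≠ Y → ¬ X ⊆ Y) → C.card ≤ b) :
    F.card ≤ a * b := by
  classical
  set P : Set α → Finset (Set α) → Prop :=
    fun X C => X ∈ C ∧ IsChain (· ⊆ ·) (C : Set (Set α)) ∧ ∀ Y ∈ C, Y ⊆ X with hP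
  set h : Set α → ℕ := fun X => (F.powerset.filter (P X)).sup Finset.card with hh
  have hmem_singleton : ∀ X ∈ F, {X} ∈ F.powerset.filter (P X) := by
    intro X hX
    simp only [Finset.mem_filter, Finset.mem_powerset, hP]
    refine ⟨Finset.singleton_subset_iff.mpr hX, Finset.mem_singleton_self X, ?_, ?_⟩
    · intro x hx y hy hxy
      simp only [Finset.coe_singleton, Set.mem_singleton_iff] at hx hy
      exact absurd (hx.trans hy.symm) hxy
    · intro Y hY; rw [Finset.mem_singleton] at hY; exact hY ▸ subset_rfl
  have h1 : ∀ X ∈ F, 1 ≤ h X := fun X hX =>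
    le_trans (by simp) (Finset.le_sup (f := Finset.card) (hmem_singleton X hX))
  have hle : ∀ X, h X ≤ a := by
    intro X
    apply Finset.sup_le
    intro C hC
    rw [Finset.mem_filter, Finset.mem_powerset] at hC
    exact hchain C hC.1 hC.2.2.1
  have hmono : ∀ X ∈ F, ∀ Y ∈ F, X ⊆ Y → X ≠ Y → h X < h Y := by
    intro X hX Y hY hXY hne
    obtain ⟨C₀, hC₀, hsup⟩ := Finset.exists_mem_eq_sup _ ⟨{X}, hmem_singleton X hX⟩
      (Finset.card)
    rw [Finset.mem_filter, Finset.mem_powerset] at hC₀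
    simp only [hP] at hC₀
    obtain ⟨hC₀F, hXC₀, hchainC₀, hallC₀⟩ := hC₀
    have hYC₀ : Y ∉ C₀ := fun hYc =>
      hne (subset_antisymm hXY (hallC₀ Y hYc))
    have hins : insert Y C₀ ∈ F.powerset.filter (P Y) := by
      rw [Finset.mem_filter, Finset.mem_powerset]
      refine ⟨Finset.insert_subset hY hC₀F, Finset.mem_insert_self _ _, ?_, ?_⟩
      · rw [Finset.coe_insert]
        exact hchainC₀.insert (fun Z hZ _ => Or.inr ((hallC₀ Z hZ).trans hXY))
      · intro Z hZ
        rcases Finset.mem_insert.mp hZ with rfl | hZ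
        · exact subset_rfl
        · exact (hallC₀ Z hZ).trans hXY
    calc h X = C₀.card := hsup
    _ < (insert Y C₀).card := by rw [Finset.card_insert_of_notMem hYC₀]; omega
    _ ≤ h Y := Finset.le_sup (f := Finset.card) hins
  -- partition by height
  have hcard := Finset.card_eq_sum_card_fiberwise
    (f := h) (s := F) (t := Finset.Icc 1 a)
    (fun X hX => Finset.mem_Icc.mpr ⟨h1 X hX, hle X⟩)
  rw [hcard]
  have : ∀ i ∈ Finset.Icc 1 a, (F.filter (fun X => h X = i)).card ≤ b := by
    intro i _
    apply hanti _ (Finset.filter_subset _ _)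
    intro X hX Y hY hne hXY
    rw [Finset.mem_filter] at hX hY
    have hlt := hmono X hX.1 Y hY.1 hXY hne
    rw [hX.2, hY.2] at hlt
    exact lt_irrefl i hlt
  calc ∑ i ∈ Finset.Icc 1 a, (F.filter (fun X => h X = i)).card
      ≤ ∑ _i ∈ Finset.Icc 1 a, b := Finset.sum_le_sum this
    _ = (Finset.Icc 1 a).card * b := by rw [Finset.sum_const, smul_eq_mul]
    _ ≤ a * b := by rw [Nat.card_Icc, Nat.add_sub_cancel]

lemma exists_chain (F : Finset (Set α)) (a b : ℕ)
    (hanti : ∀ C : Finset (Set α), C ⊆ F →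
      (∀ X ∈ C, ∀ Y ∈ C, X ≠ Y → ¬ X ⊆ Y) → C.card ≤ b)
    (hcard : a * b < F.card) :
    ∃ C : Finset (Set α), C ⊆ F ∧ IsChain (· ⊆ ·) (C : Set (Set α)) ∧ a + 1 ≤ C.card := by
  by_contra hcon
  push_neg at hcon
  have := mirsky F a b (fun C hCF hCc => by
    have := hcon C hCF hCc; omega) hanti
  omega

lemma chain_min (C : Finset (Set α)) (hne : C.Nonempty)
    (hc : IsChain (· ⊆ ·) (C : Set (Set α))) : ∃ M ∈ C, ∀ X ∈ C, M ⊆ X := by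
  obtain ⟨M, hM, hmin⟩ : ∃ M ∈ (C : Set (Set α)), ∀ X ∈ (C : Set (Set α)), X ⊆ M → M = X := by
    obtain ⟨M, hM⟩ := (C.finite_toSet).exists_minimal (by exact_mod_cast hne)
    exact ⟨M, hM.1, fun X hX h => subset_antisymm (hM.2 hX h) h⟩
  refine ⟨M, by exact_mod_cast hM, fun X hX => ?_⟩
  rcases eq_or_ne M X with rfl | hne'
  · exact subset_rfl
  · rcases hc hM (by exact_mod_cast hX) hne' with h | h
    · exact h
    · have : M = X := by simpa using hmin X (by exact_mod_cast hX) h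
      exact this ▸ subset_rfl

end Aux

/-- Circle graphs (overlap graphs of families of intervals of a linear order) that are
`K_t`-free and `K_{t,t}`-subgraph-free have maximum edge density at most `2(t-1)²`:
for any finite set `S` of vertices, the number of ordered adjacent pairs inside `S`
(which is twice the number of edges) is at most `4(t-1)²·|S|`. -/
theorem circle_graph_edge_density {α : Type*} [LinearOrder α] (t : ℕ) (I : Set (Set α))
    (hint : ∀ A ∈ I, A.OrdConnected)
    (hKt : ¬ ∃ s : Finset (Set α), ↑s ⊆ I ∧ s.card = t ∧
      ∀ A ∈ s, ∀ B ∈ s, A ≠ B → Overlap A B)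
    (hKtt : ¬ ∃ s₁ s₂ : Finset (Set α), ↑s₁ ⊆ I ∧ ↑s₂ ⊆ I ∧
      s₁.card = t ∧ s₂.card = t ∧ Disjoint s₁ s₂ ∧ ∀ A ∈ s₁, ∀ B ∈ s₂, Overlap A B) :
    ∀ S : Finset (Set α), ↑S ⊆ I →
      ({p : Set α × Set α | p.1 ∈ S ∧ p.2 ∈ S ∧ Overlap p.1 p.2}).ncard
        ≤ 4 * (t - 1) ^ 2 * S.card := by
  classical
  intro S hS
  by_cases ht : t = 0
  · exact absurd ⟨∅, by simp, by simp [ht], by simp⟩ hKt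
  have hoc : ∀ A ∈ S, Set.OrdConnected A := fun A hA => hint A (hS hA)
  -- convert the set of pairs to a Finset
  have hset : {p : Set α × Set α | p.1 ∈ S ∧ p.2 ∈ S ∧ Overlap p.1 p.2}
      = ↑((S ×ˢ S).filter (fun p => Overlap p.1 p.2)) := by
    ext p
    simp only [Set.mem_setOf_eq, Finset.coe_filter, Finset.mem_product, Set.mem_setOf_eq,
      and_assoc]
  rw [hset, Set.ncard_coe_finset]
  set P₁ := (S ×ˢ S).filter (fun p => LC p.1 p.2) with hP₁def
  -- antichain bound from Kt-freeness
  have hanti : ∀ C : Finset (Set α), C ⊆ S →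
      (∀ X ∈ C, ∀ Y ∈ C, X ≠ Y → (X ∩ Y).Nonempty) →
      (∀ X ∈ C, ∀ Y ∈ C, X ≠ Y → ¬ X ⊆ Y) → C.card ≤ t - 1 := by
    intro C hCS hint' hanti'
    by_contra hcon
    obtain ⟨C', hC'C, hC'card⟩ := Finset.exists_subset_card_eq (show t ≤ C.card by omega)
    exact hKt ⟨C', (Finset.coe_subset.mpr (hC'C.trans hCS)).trans hS, hC'card,
      fun A hA B hB hne => ⟨hint' A (hC'C hA) B (hC'C hB) hne,
        hanti' A (hC'C hA) B (hC'C hB) hne, hanti' B (hC'C hB) A (hC'C hA) hne.symm⟩⟩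
  -- the "deep" predicate
  set Dp : Set α → Set α → Prop :=
    fun A B => t - 1 ≤ (S.filter (fun B' => B ⊂ B' ∧ Overlap A B')).card with hDp
  -- per-vertex bound on shallow right-neighbours
  have hshallow : ∀ A ∈ S, (S.filter (fun B => LC A B ∧ ¬ Dp A B)).card ≤ (t-1)*(t-1) := by
    intro A hA
    apply mirsky _ (t-1) (t-1)
    · intro C hC hchainC
      by_contra hcon
      obtain ⟨C', hC'C, hC'card⟩ := Finset.exists_subset_card_eq (show t ≤ C.card by omega)
      have hchainC' : IsChain (· ⊆ ·) (C' : Set (Set α)) :=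
        hchainC.mono (by exact_mod_cast hC'C)
      have hC'ne : C'.Nonempty := by rw [← Finset.card_pos, hC'card]; omega
      obtain ⟨B₀, hB₀, hmin⟩ := chain_min C' hC'ne hchainC'
      have hB₀f := Finset.mem_filter.mp (hC (hC'C hB₀))
      apply hB₀f.2.2
      have hsub : C'.erase B₀ ⊆ S.filter (fun B' => B₀ ⊂ B' ∧ Overlap A B') := by
        intro X hX
        obtain ⟨hXne, hXC'⟩ := Finset.mem_erase.mp hX
        have hXf := Finset.mem_filter.mp (hC (hC'C hXC'))
        exact Finset.mem_filter.mpr ⟨hXf.1,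
          (hmin X hXC').ssubset_of_ne hXne.symm, hXf.2.1.overlap⟩
      show t - 1 ≤ _
      calc t - 1 = (C'.erase B₀).card := by rw [Finset.card_erase_of_mem hB₀, hC'card]
        _ ≤ _ := Finset.card_le_card hsub
    · intro C hC hantiC
      apply hanti C (hC.trans (Finset.filter_subset _ _)) ?_ hantiC
      intro X hX Y hY hne
      have hXf := Finset.mem_filter.mp (hC hX)
      have hYf := Finset.mem_filter.mp (hC hY)
      exact lc_inter_right (hoc X hXf.1) (hoc Y hYf.1) hXf.2.1 hYf.2.1
  -- per-vertex bound on deep left-neighbours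
  have hdeep : ∀ B ∈ S, (S.filter (fun A => LC A B ∧ Dp A B)).card ≤ (t-1)*(t-1) := by
    intro B hB
    by_contra hcon
    push_neg at hcon
    have hantiD : ∀ C : Finset (Set α), C ⊆ S.filter (fun A => LC A B ∧ Dp A B) →
        (∀ X ∈ C, ∀ Y ∈ C, X ≠ Y → ¬ X ⊆ Y) → C.card ≤ t - 1 := by
      intro C hC hantiC
      apply hanti C (hC.trans (Finset.filter_subset _ _)) ?_ hantiC
      intro X hX Y hY hne
      have hXf := Finset.mem_filter.mp (hC hX)
      have hYf := Finset.mem_filter.mp (hC hY)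
      exact lc_inter_left (hoc X hXf.1) (hoc Y hYf.1) hXf.2.1 hYf.2.1
    obtain ⟨C, hCD, hchainC, hCcard⟩ := exists_chain _ (t-1) (t-1) hantiD hcon
    obtain ⟨C', hC'C, hC'card⟩ := Finset.exists_subset_card_eq (show t ≤ C.card by omega)
    have hchainC' : IsChain (· ⊆ ·) (C' : Set (Set α)) :=
      hchainC.mono (by exact_mod_cast hC'C)
    have hC'ne : C'.Nonempty := by rw [← Finset.card_pos, hC'card]; omega
    obtain ⟨A₁, hA₁, hminA⟩ := chain_min C' hC'ne hchainC'
    have hA₁f := Finset.mem_filter.mp (hCD (hC'C hA₁))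
    have hA₁dp : t - 1 ≤ (S.filter (fun B' => B ⊂ B' ∧ Overlap A₁ B')).card := hA₁f.2.2
    obtain ⟨T', hT'T, hT'card⟩ := Finset.exists_subset_card_eq hA₁dp
    have hBT' : B ∉ T' := fun hmem => by
      have := Finset.mem_filter.mp (hT'T hmem)
      exact absurd this.2.1 (ssubset_irrefl B)
    have hover : ∀ A ∈ C', ∀ Y ∈ insert B T', Overlap A Y := by
      intro A hA' Y hY
      have hAf := Finset.mem_filter.mp (hCD (hC'C hA'))
      have hAlc : LC A B := hAf.2.1
      rcases Finset.mem_insert.mp hY with rfl | hY'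
      · exact hAlc.overlap
      · have hYf := Finset.mem_filter.mp (hT'T hY')
        obtain ⟨hBY, hA₁Y⟩ := hYf.2
        have hA₁A : A₁ ⊆ A := hminA A hA'
        refine ⟨?_, ?_, ?_⟩
        · obtain ⟨c, hc1, hc2⟩ := hA₁Y.1
          exact ⟨c, hA₁A hc1, hc2⟩
        · exact fun hsub => hA₁Y.2.1 (hA₁A.trans hsub)
        · exact fun hsub => hAlc.overlap.2.2 (hBY.subset.trans hsub)
    have hdisj : Disjoint C' (insert B T') := by
      rw [Finset.disjoint_left]
      intro X hX1 hX2
      exact overlap_ne (hover X hX1 X hX2) rfl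
    have hs₂S : insert B T' ⊆ S :=
      Finset.insert_subset hB (hT'T.trans (Finset.filter_subset _ _))
    apply hKtt
    refine ⟨C', insert B T',
      (Finset.coe_subset.mpr ((hC'C.trans hCD).trans (Finset.filter_subset _ _))).trans hS,
      (Finset.coe_subset.mpr hs₂S).trans hS, hC'card, ?_, hdisj, hover⟩
    rw [Finset.card_insert_of_notMem hBT', hT'card]
    omega
  -- from overlap pairs to oriented pairs
  have hsplit : ((S ×ˢ S).filter (fun p => Overlap p.1 p.2)).card ≤ 2 * P₁.card := by
    have hsub : (S ×ˢ S).filter (fun p => Overlap p.1 p.2) ⊆ P₁ ∪ P₁.image Prod.swap := by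
      intro p hp
      rw [Finset.mem_filter, Finset.mem_product] at hp
      obtain ⟨⟨h1, h2⟩, hov⟩ := hp
      rcases overlap_lc (hoc _ h1) (hoc _ h2) hov with h | h
      · exact Finset.mem_union_left _
          (Finset.mem_filter.mpr ⟨Finset.mem_product.mpr ⟨h1, h2⟩, h⟩)
      · apply Finset.mem_union_right
        refine Finset.mem_image.mpr ⟨p.swap, ?_, ?_⟩
        · exact Finset.mem_filter.mpr ⟨Finset.mem_product.mpr ⟨h2, h1⟩, h⟩
        · simp
    calc ((S ×ˢ S).filter (fun p => Overlap p.1 p.2)).card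
        ≤ (P₁ ∪ P₁.image Prod.swap).card := Finset.card_le_card hsub
      _ ≤ P₁.card + (P₁.image Prod.swap).card := Finset.card_union_le _ _
      _ ≤ P₁.card + P₁.card := Nat.add_le_add_left (Finset.card_image_le) _
      _ = 2 * P₁.card := by ring
  -- shallow oriented pairs
  have hshtot : (P₁.filter (fun p => ¬ Dp p.1 p.2)).card ≤ S.card * ((t-1)*(t-1)) := by
    rw [Finset.card_eq_sum_card_fiberwise (f := Prod.fst) (t := S)
      (fun p hp => (Finset.mem_product.mp
        (Finset.mem_filter.mp (Finset.mem_filter.mp hp).1).1).1)]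
    calc ∑ A ∈ S, ((P₁.filter (fun p => ¬ Dp p.1 p.2)).filter (fun p => p.1 = A)).card
        ≤ ∑ A ∈ S, (t-1)*(t-1) := by
          apply Finset.sum_le_sum
          intro A hA
          refine le_trans (Finset.card_le_card_of_injOn Prod.snd ?_ ?_) (hshallow A hA)
          · intro p hp
            obtain ⟨hp1, hp2⟩ := Finset.mem_filter.mp hp
            obtain ⟨hpP, hpD⟩ := Finset.mem_filter.mp hp1
            obtain ⟨hpS, hplc⟩ := Finset.mem_filter.mp hpP
            exact Finset.mem_filter.mpr ⟨(Finset.mem_product.mp hpS).2,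
              hp2 ▸ hplc, hp2 ▸ hpD⟩
          · intro p hp q hq hpq
            have h1 := (Finset.mem_filter.mp hp).2
            have h2 := (Finset.mem_filter.mp hq).2
            exact Prod.ext (h1.trans h2.symm) hpq
      _ = S.card * ((t-1)*(t-1)) := by rw [Finset.sum_const, smul_eq_mul]
  -- deep oriented pairs
  have hdptot : (P₁.filter (fun p => Dp p.1 p.2)).card ≤ S.card * ((t-1)*(t-1)) := by
    rw [Finset.card_eq_sum_card_fiberwise (f := Prod.snd) (t := S)
      (fun p hp => (Finset.mem_product.mp
        (Finset.mem_filter.mp (Finset.mem_filter.mp hp).1).1).2)]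
    calc ∑ B ∈ S, ((P₁.filter (fun p => Dp p.1 p.2)).filter (fun p => p.2 = B)).card
        ≤ ∑ B ∈ S, (t-1)*(t-1) := by
          apply Finset.sum_le_sum
          intro B hB
          refine le_trans (Finset.card_le_card_of_injOn Prod.fst ?_ ?_) (hdeep B hB)
          · intro p hp
            obtain ⟨hp1, hp2⟩ := Finset.mem_filter.mp hp
            obtain ⟨hpP, hpD⟩ := Finset.mem_filter.mp hp1
            obtain ⟨hpS, hplc⟩ := Finset.mem_filter.mp hpP
            exact Finset.mem_filter.mpr ⟨(Finset.mem_product.mp hpS).1,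
              hp2 ▸ hplc, hp2 ▸ hpD⟩
          · intro p hp q hq hpq
            have h1 := (Finset.mem_filter.mp hp).2
            have h2 := (Finset.mem_filter.mp hq).2
            exact Prod.ext hpq (h1.trans h2.symm)
      _ = S.card * ((t-1)*(t-1)) := by rw [Finset.sum_const, smul_eq_mul]
  have hP₁bound : P₁.card ≤ S.card * ((t-1)*(t-1)) + S.card * ((t-1)*(t-1)) := by
    calc P₁.card
        = (P₁.filter (fun p => Dp p.1 p.2)).card
          + (P₁.filter (fun p => ¬ Dp p.1 p.2)).card :=
          (Finset.card_filter_add_card_filter_not _).symm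
      _ ≤ _ := Nat.add_le_add hdptot hshtot
  calc ((S ×ˢ S).filter (fun p => Overlap p.1 p.2)).card
      ≤ 2 * P₁.card := hsplit
    _ ≤ 2 * (S.card * ((t-1)*(t-1)) + S.card * ((t-1)*(t-1))) :=
        Nat.mul_le_mul_left 2 hP₁bound
    _ = 4 * (t-1)^2 * S.card := by ring
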